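/- Let d ≥ 1 and let f : EuclideanSpace ℝ (Fin d) → EuclideanSpace ℝ (Fin d) → ℝ satisfy f x θ = f x θ₀ + ⟪θ - θ₀, x⟫ for all x, θ and a fixed θ₀. Let τ₁, …, τ_T be task vectors and D₁, …, D_T ⊆ EuclideanSpace ℝ (Fin d) be task supports. Assume orthogonality between task vectors and foreign data points: for every t and every x ∈ D_{t'} with t' ≠ t, ⟪τ_t, x⟫ = 0, and for every x ∉ ⋃_{t} D_t, ⟪τ_t, x⟫ = 0 for all t. Then f is weight disentangled with respect to {τ_t} and {D_t}: for all coefficients α₁, …, α_T ∈ ℝ, if x ∈ D_t then f x (θ₀ + ∑_{s=1}^T α_s • τ_s) = f x (θ₀ + α_t • τ_t), and if x ∉ ⋃_{t} D_t then f x (θ₀ + ∑_{s=1}^T α_s • τ_s) = f x θ₀. -/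
import Mathlib


open scoped RealInnerProductSpace

/-- For a linear representation model, orthogonality between each task vector
`τ_t` and the data points of all other tasks (and of points outside all
supports) implies weight disentanglement with respect to `{τ_t}` and `{D_t}`. -/
theorem linear_model_orthogonality_implies_weight_disentanglement
    (d : ℕ) (hd : 1 ≤ d)
    (f : EuclideanSpace ℝ (Fin d) → EuclideanSpace ℝ (Fin d) → ℝ)
    (θ₀ : EuclideanSpace ℝ (Fin d))
    (hf : ∀ x θ, f x θ = f x θ₀ + ⟪θ - θ₀, x⟫)
    (T : ℕ) (τ : Fin T → EuclideanSpace ℝ (Fin d))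
    (D : Fin T → Set (EuclideanSpace ℝ (Fin d)))
    (horth : ∀ t t' : Fin T, t' ≠ t → ∀ x ∈ D t', ⟪τ t, x⟫ = 0)
    (hout : ∀ x, x ∉ ⋃ t, D t → ∀ t, ⟪τ t, x⟫ = 0)
    (α : Fin T → ℝ) (x : EuclideanSpace ℝ (Fin d)) :
    (∀ t, x ∈ D t → f x (θ₀ + ∑ s, α s • τ s) = f x (θ₀ + α t • τ t)) ∧
    (x ∉ ⋃ t, D t → f x (θ₀ + ∑ s, α s • τ s) = f x θ₀) := by
  constructor
  · intro t hx
    rw [hf x (θ₀ + ∑ s, α s • τ s), hf x (θ₀ + α t • τ t)]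
    simp only [add_sub_cancel_left]
    congr 1
    rw [sum_inner]
    rw [Finset.sum_eq_single t]
    · intro s _ hs
      rw [real_inner_smul_left, horth s t hs.symm x hx, mul_zero]
    · intro h; exact absurd (Finset.mem_univ t) h
  · intro hx
    rw [hf x (θ₀ + ∑ s, α s • τ s), hf x θ₀]
    simp only [add_sub_cancel_left, sub_self, inner_zero_left]
    rw [sum_inner, Finset.sum_eq_zero, add_zero]
    intro s _
    rw [real_inner_smul_left, hout x hx s, mul_zero]
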